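/- arXiv:1308.5492 — 2 statements merged into one kernel-verified Lean document; each statement's English description precedes it below -/
import Mathlib

section
/- Let p be an odd prime and h an integer. Then 𝐁(p,h) = −(p+1)² if p ≡ 3 (mod 4) and p ∤ h; 𝐁(p,h) = −(p²+6p+1) − 4p(p+1)·(h/p) if p ≡ 1 (mod 4) and p ∤ h, where (h/p) is the Legendre symbol; 𝐁(p,h) = (p−1)(p+1)² if p ≡ 3 (mod 4) and p | h; and 𝐁(p,h) = (p−1)(p²+6p+1) if p ≡ 1 (mod 4) and p | h. -/
set_option autoImplicit false

open scoped Classical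

noncomputable section

/-- `e(x) = exp(2πix)`. -/
def e (x : ℝ) : ℂ := Complex.exp (2 * Real.pi * Complex.I * x)

/-- The Gauss-type sum `C*(q,a) = ∑_{1 ≤ m ≤ q, (m,q)=1} e(am²/q)`. -/
def Cstar (q : ℕ) (a : ℤ) : ℂ :=
  ∑ m ∈ (Finset.Icc 1 q).filter (fun m => Nat.gcd m q = 1),
    e ((a : ℝ) * (m : ℝ) ^ 2 / q)

/-- `𝐁(p,h) = ∑_{a=1}^{p−1} |C*(p,a)|⁴ e(ah/p)`. -/
def Bp (p : ℕ) (h : ℤ) : ℂ :=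
  ∑ a ∈ Finset.Icc 1 (p - 1),
    ((‖Cstar p (a : ℤ)‖) ^ 4 : ℂ) * e ((a : ℝ) * (h : ℝ) / p)

lemma e_eq_std (p : ℕ) [NeZero p] (j : ℤ) :
    e ((j : ℝ) / p) = ZMod.stdAddChar ((j : ZMod p)) := by
  rw [ZMod.stdAddChar_coe, e]; push_cast; ring_nf

lemma Cstar_eq (p : ℕ) [hp : Fact p.Prime] (a : ℤ) :
    Cstar p a = (∑ x : ZMod p, ZMod.stdAddChar ((a : ZMod p) * x ^ 2)) - 1 := by
  classical
  have hp1 : 1 < p := hp.out.one_lt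
  have key : ∑ x : ZMod p, ZMod.stdAddChar ((a : ZMod p) * x ^ 2)
      = 1 + ∑ x ∈ Finset.univ.filter (fun x : ZMod p => x ≠ 0),
          ZMod.stdAddChar ((a : ZMod p) * x ^ 2) := by
    rw [← Finset.sum_filter_add_sum_filter_not Finset.univ (fun x : ZMod p => x = 0)]
    congr 1
    · rw [Finset.filter_eq']
      simp
  rw [key]
  have hbij : ∑ m ∈ (Finset.Icc 1 p).filter (fun m => Nat.gcd m p = 1),
      e ((a : ℝ) * (m : ℝ) ^ 2 / p)
      = ∑ x ∈ Finset.univ.filter (fun x : ZMod p => x ≠ 0),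
          ZMod.stdAddChar ((a : ZMod p) * x ^ 2) := by
    refine Finset.sum_nbij' (fun m => (m : ZMod p)) (fun x => x.val) ?_ ?_ ?_ ?_ ?_
    · intro m hm
      simp only [Finset.mem_filter, Finset.mem_Icc] at hm
      simp only [Finset.mem_filter, Finset.mem_univ, true_and]
      intro h0
      rw [ZMod.natCast_eq_zero_iff] at h0
      rcases hm with ⟨⟨h1, _⟩, hg⟩
      have : p ∣ 1 := hg ▸ Nat.dvd_gcd h0 dvd_rfl
      have := Nat.le_of_dvd one_pos this
      omega
    · intro x hx
      simp only [Finset.mem_filter, Finset.mem_univ, true_and] at hx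
      simp only [Finset.mem_filter, Finset.mem_Icc]
      have hv : x.val < p := ZMod.val_lt x
      have hv0 : x.val ≠ 0 := fun h => hx (by rwa [← ZMod.val_eq_zero])
      refine ⟨⟨Nat.one_le_iff_ne_zero.mpr hv0, hv.le⟩, ?_⟩
      have hnd : ¬ p ∣ x.val := by
        intro hd
        exact hv0 (Nat.eq_zero_of_dvd_of_lt hd hv)
      exact Nat.gcd_comm x.val p ▸ (Nat.Prime.coprime_iff_not_dvd hp.out).mpr hnd
    · intro m hm
      simp only [Finset.mem_filter, Finset.mem_Icc] at hm
      have hmp : m < p := by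
        rcases hm with ⟨⟨h1, h2⟩, hg⟩
        rcases lt_or_eq_of_le h2 with h | rfl
        · exact h
        · rw [Nat.gcd_self] at hg; omega
      exact ZMod.val_natCast_of_lt hmp
    · intro x hx
      exact ZMod.natCast_zmod_val x
    · intro m hm
      have : ((a : ℝ) * (m : ℝ) ^ 2 / p) = (((a * (m:ℤ)^2 : ℤ) : ℝ) / p) := by push_cast; ring
      rw [this, e_eq_std]
      push_cast
      ring_nf
  rw [Cstar, hbij]; ring

abbrev χC (p : ℕ) [Fact p.Prime] : MulChar (ZMod p) ℂ :=
  (quadraticChar (ZMod p)).ringHomComp (Int.castRingHom ℂ)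

variable (p : ℕ) [hp : Fact p.Prime]

lemma rc2 (hp2 : p ≠ 2) : ringChar (ZMod p) ≠ 2 := by
  rw [ZMod.ringChar_zmod_n]; exact hp2

lemma sum_sq_fiber (hp2 : p ≠ 2) (f : ZMod p → ℂ) :
    ∑ x : ZMod p, f (x ^ 2) = ∑ t : ZMod p, (χC p t + 1) * f t := by
  classical
  rw [← Finset.sum_fiberwise Finset.univ (fun x : ZMod p => x ^ 2) (fun x => f (x ^ 2))]
  refine Finset.sum_congr rfl fun t _ => ?_
  rw [Finset.sum_congr rfl (fun x hx => by
    simp only [Finset.mem_filter] at hx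
    rw [hx.2]), Finset.sum_const, nsmul_eq_mul]
  congr 1
  have h := quadraticChar_card_sqrts (rc2 p hp2) t
  have hset : {x : ZMod p | x ^ 2 = t}.toFinset
      = Finset.univ.filter (fun x : ZMod p => x ^ 2 = t) := by
    ext x; simp
  rw [hset] at h
  have : ((Finset.univ.filter (fun x : ZMod p => x ^ 2 = t)).card : ℂ)
      = (((Finset.univ.filter (fun x : ZMod p => x ^ 2 = t)).card : ℤ) : ℂ) := by push_cast; rfl
  rw [this, h]
  push_cast
  simp [χC]

local notation "ψ" p => ZMod.stdAddChar (N := p)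

lemma χC_ne_one (hp2 : p ≠ 2) : χC p ≠ 1 :=
  (MulChar.ringHomComp_ne_one_iff (RingHom.injective_int _)).mpr
    (quadraticChar_ne_one (rc2 p hp2))

lemma χC_quad : (χC p).IsQuadratic :=
  (quadraticChar_isQuadratic (ZMod p)).comp _

lemma χC_sq_one {b : ZMod p} (hb : b ≠ 0) : χC p b * χC p b = 1 := by
  have h := quadraticChar_sq_one hb
  have : ((quadraticChar (ZMod p) b : ℤ) : ℂ) * ((quadraticChar (ZMod p) b : ℤ) : ℂ)
      = (((quadraticChar (ZMod p) b) ^ 2 : ℤ) : ℂ) := by push_cast; ring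
  simpa [χC, this, h] using this ▸ (by rw [h]; norm_num :
    (((quadraticChar (ZMod p) b) ^ 2 : ℤ) : ℂ) = 1)

lemma sum_psi_mul (hp2 : p ≠ 2) (b : ZMod p) (hb : b ≠ 0) :
    ∑ x : ZMod p, (ψ p) (b * x ^ 2) = χC p b * gaussSum (χC p) (ψ p) := by
  classical
  rw [sum_sq_fiber p hp2 (fun t => (ψ p) (b * t))]
  have h1 : ∑ t : ZMod p, (χC p t + 1) * (ψ p) (b * t)
      = (∑ t : ZMod p, χC p t * (ψ p) (b * t)) + ∑ t : ZMod p, (ψ p) (t * b) := by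
    rw [← Finset.sum_add_distrib]
    refine Finset.sum_congr rfl fun t _ => by rw [add_mul, one_mul, mul_comm b t]
  rw [h1, AddChar.sum_mulShift b (ZMod.isPrimitive_stdAddChar p), if_neg hb]
  rw [Nat.cast_zero, add_zero]
  have h2 : ∑ t : ZMod p, χC p t * (ψ p) (b * t) = gaussSum (χC p) ((ψ p).mulShift b) := by
    simp [gaussSum, AddChar.mulShift_apply]
  have h3 := gaussSum_mulShift (χC p) (ψ p) (Units.mk0 b hb)
  simp only [Units.val_mk0] at h3
  rw [h2]
  calc gaussSum (χC p) ((ψ p).mulShift b)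
      = (χC p b * χC p b) * gaussSum (χC p) ((ψ p).mulShift b) := by rw [χC_sq_one p hb]; ring
    _ = χC p b * (χC p b * gaussSum (χC p) ((ψ p).mulShift b)) := by ring
    _ = χC p b * gaussSum (χC p) (ψ p) := by rw [h3]

lemma g_sq (hp2 : p ≠ 2) :
    gaussSum (χC p) (ψ p) ^ 2 = χC p (-1) * p := by
  have := gaussSum_sq (χC_ne_one p hp2) (χC_quad p) (ZMod.isPrimitive_stdAddChar p)
  rwa [ZMod.card p] at this

lemma conj_psi (x : ZMod p) : (starRingEnd ℂ) ((ψ p) x) = (ψ p) (-x) := by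
  have habs : ‖(ψ p) x‖ = 1 := by
    rw [ZMod.stdAddChar_apply]; exact Circle.norm_coe _
  have h1 : (ψ p) x * (ψ p) (-x) = 1 := by
    rw [← AddChar.map_add_eq_mul]; simp
  have h2 : (starRingEnd ℂ) ((ψ p) x) * (ψ p) x = 1 := by
    rw [mul_comm, Complex.mul_conj, ← Complex.sq_norm, habs]
    norm_num
  have hinv : (starRingEnd ℂ) ((ψ p) x) = ((ψ p) x)⁻¹ := eq_inv_of_mul_eq_one_left h2
  have hinv2 : (ψ p) (-x) = ((ψ p) x)⁻¹ := by
    refine eq_inv_of_mul_eq_one_left ?_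
    rw [mul_comm]; exact h1
  rw [hinv, hinv2]

lemma conj_g :
    (starRingEnd ℂ) (gaussSum (χC p) (ψ p)) = χC p (-1) * gaussSum (χC p) (ψ p) := by
  classical
  have hm1 : (-1 : ZMod p) ≠ 0 := by
    have : (1 : ZMod p) ≠ 0 := one_ne_zero
    simpa using neg_ne_zero.mpr this
  have hconj : (starRingEnd ℂ) (gaussSum (χC p) (ψ p))
      = gaussSum (χC p) ((ψ p).mulShift (-1)) := by
    rw [gaussSum, map_sum]
    refine Finset.sum_congr rfl fun t _ => ?_
    rw [map_mul, conj_psi, AddChar.mulShift_apply, neg_one_mul]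
    congr 1
    simp [χC]
  have h3 := gaussSum_mulShift (χC p) (ψ p) (-1 : (ZMod p)ˣ)
  have hval : ((-1 : (ZMod p)ˣ) : ZMod p) = -1 := by simp
  rw [hval] at h3
  rw [hconj]
  calc gaussSum (χC p) ((ψ p).mulShift (-1))
      = (χC p (-1) * χC p (-1)) * gaussSum (χC p) ((ψ p).mulShift (-1)) := by
        rw [χC_sq_one p hm1]; ring
    _ = χC p (-1) * (χC p (-1) * gaussSum (χC p) ((ψ p).mulShift (-1))) := by ring
    _ = χC p (-1) * gaussSum (χC p) (ψ p) := by rw [h3]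

lemma χC_neg_one (hp2 : p ≠ 2) :
    χC p (-1) = (if p % 4 = 1 then 1 else -1 : ℂ) := by
  have h := quadraticChar_neg_one (rc2 p hp2)
  rw [ZMod.card p, ZMod.χ₄_nat_eq_if_mod_four] at h
  have hodd : p % 2 ≠ 0 := by
    have := hp.out.two_le
    rcases Nat.Prime.eq_two_or_odd hp.out with h2 | h2
    · exact absurd h2 hp2
    · omega
  rw [if_neg hodd] at h
  simp only [χC, MulChar.ringHomComp_apply, h]
  split_ifs <;> norm_num

abbrev Gp (p : ℕ) [Fact p.Prime] : ℂ := gaussSum (χC p) (ZMod.stdAddChar (N := p))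

lemma abs4 (z : ℂ) : ((‖z‖) ^ 4 : ℂ) = (z * (starRingEnd ℂ) z) ^ 2 := by
  rw [Complex.mul_conj]
  have : ((‖z‖) ^ 4 : ℝ) = ((Complex.normSq z) ^ 2 : ℝ) := by
    rw [← Complex.sq_norm]; ring
  calc ((‖z‖ : ℂ)) ^ 4 = (((‖z‖ ^ 4 : ℝ)) : ℂ) := by push_cast; ring
    _ = (((Complex.normSq z ^ 2 : ℝ)) : ℂ) := by rw [this]
    _ = ((Complex.normSq z : ℂ)) ^ 2 := by push_cast; ring

lemma S1 (h' : ZMod p) :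
    ∑ x ∈ Finset.univ.filter (fun x : ZMod p => x ≠ 0), (ZMod.stdAddChar (x * h'))
      = (if h' = 0 then (p : ℂ) else 0) - 1 := by
  classical
  have hsplit : (∑ x : ZMod p, ZMod.stdAddChar (x * h'))
      = ZMod.stdAddChar ((0 : ZMod p) * h')
        + ∑ x ∈ Finset.univ.filter (fun x : ZMod p => x ≠ 0), ZMod.stdAddChar (x * h') := by
    rw [← Finset.sum_filter_add_sum_filter_not Finset.univ (fun x : ZMod p => x = 0)]
    congr 1
    rw [Finset.filter_eq']
    simp
  rw [AddChar.sum_mulShift h' (ZMod.isPrimitive_stdAddChar p)] at hsplit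
  simp only [zero_mul, AddChar.map_zero_eq_one] at hsplit
  rw [ZMod.card p] at hsplit
  split_ifs with h0
  · rw [if_pos h0] at hsplit; linear_combination -hsplit
  · rw [if_neg h0] at hsplit
    push_cast at hsplit ⊢
    linear_combination -hsplit

lemma S2 (hp2 : p ≠ 2) (h' : ZMod p) :
    ∑ x ∈ Finset.univ.filter (fun x : ZMod p => x ≠ 0), χC p x * ZMod.stdAddChar (x * h')
      = if h' = 0 then 0 else χC p h' * Gp p := by
  classical
  have hfull : ∑ x ∈ Finset.univ.filter (fun x : ZMod p => x ≠ 0), χC p x * ZMod.stdAddChar (x * h')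
      = ∑ x : ZMod p, χC p x * ZMod.stdAddChar (x * h') := by
    rw [Finset.sum_filter]
    refine Finset.sum_congr rfl fun x _ => ?_
    split_ifs with hx
    · rfl
    · push_neg at hx
      simp [hx]
  rw [hfull]
  split_ifs with h0
  · subst h0
    simp only [mul_zero, AddChar.map_zero_eq_one, mul_one]
    exact MulChar.sum_eq_zero_of_ne_one (χC_ne_one p hp2)
  · have h2 : ∑ x : ZMod p, χC p x * ZMod.stdAddChar (x * h')
        = gaussSum (χC p) ((ZMod.stdAddChar (N := p)).mulShift h') := by
      simp only [gaussSum, AddChar.mulShift_apply]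
      exact Finset.sum_congr rfl fun x _ => by rw [mul_comm x h']
    have h3 := gaussSum_mulShift (χC p) (ZMod.stdAddChar (N := p)) (Units.mk0 h' h0)
    simp only [Units.val_mk0] at h3
    rw [h2]
    calc gaussSum (χC p) ((ZMod.stdAddChar (N := p)).mulShift h')
        = (χC p h' * χC p h') * gaussSum (χC p) ((ZMod.stdAddChar (N := p)).mulShift h') := by
          rw [χC_sq_one p h0]; ring
      _ = χC p h' * (χC p h' * gaussSum (χC p) ((ZMod.stdAddChar (N := p)).mulShift h')) := by ring
      _ = χC p h' * Gp p := by rw [h3]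

lemma Cstar_val (hp2 : p ≠ 2) (a : ℤ) (ha : (a : ZMod p) ≠ 0) :
    Cstar p a = χC p (a : ZMod p) * Gp p - 1 := by
  rw [Cstar_eq p a, sum_psi_mul p hp2 _ ha]

lemma Bp_eq (hp2 : p ≠ 2) (h : ℤ) :
    Bp p h = ∑ x ∈ Finset.univ.filter (fun x : ZMod p => x ≠ 0),
      ((‖χC p x * Gp p - 1‖) ^ 4 : ℂ) * ZMod.stdAddChar (x * (h : ZMod p)) := by
  classical
  rw [Bp]
  refine Finset.sum_nbij' (fun m => (m : ZMod p)) (fun x => x.val) ?_ ?_ ?_ ?_ ?_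
  · intro m hm
    simp only [Finset.mem_Icc] at hm
    simp only [Finset.mem_filter, Finset.mem_univ, true_and]
    intro h0
    rw [ZMod.natCast_eq_zero_iff] at h0
    have h2 := hp.out.two_le
    have := Nat.le_of_dvd (by omega) h0
    omega
  · intro x hx
    simp only [Finset.mem_filter, Finset.mem_univ, true_and] at hx
    simp only [Finset.mem_Icc]
    have hv : x.val < p := ZMod.val_lt x
    have hv0 : x.val ≠ 0 := fun h => hx (by rwa [← ZMod.val_eq_zero])
    omega
  · intro m hm
    simp only [Finset.mem_Icc] at hm
    have h2 := hp.out.two_le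
    exact ZMod.val_natCast_of_lt (by omega)
  · intro x hx
    exact ZMod.natCast_zmod_val x
  · intro m hm
    simp only [Finset.mem_Icc] at hm
    have h2 := hp.out.two_le
    have hm0 : ((m : ℤ) : ZMod p) ≠ 0 := by
      push_cast
      intro h0
      rw [ZMod.natCast_eq_zero_iff] at h0
      have := Nat.le_of_dvd (by omega) h0
      omega
    rw [Cstar_val p hp2 (m : ℤ) hm0]
    have hcast : (((m : ℤ) : ZMod p)) = ((m : ZMod p)) := by push_cast; rfl
    rw [hcast]
    congr 1
    have : ((m : ℝ) * (h : ℝ) / p) = ((((m : ℤ) * h : ℤ) : ℝ) / p) := by push_cast; ring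
    rw [this, e_eq_std]
    congr 1
    push_cast
    rfl

/-- Explicit evaluation of `𝐁(p,h)` for odd primes `p`. -/
theorem Bp_eval (p : ℕ) [hp : Fact p.Prime] (hp2 : p ≠ 2) (h : ℤ) :
    (p % 4 = 3 → ¬ (p : ℤ) ∣ h → Bp p h = -((p : ℂ) + 1) ^ 2) ∧
    (p % 4 = 1 → ¬ (p : ℤ) ∣ h →
      Bp p h = -((p : ℂ) ^ 2 + 6 * p + 1) - 4 * p * (p + 1) * (legendreSym p h : ℂ)) ∧
    (p % 4 = 3 → (p : ℤ) ∣ h → Bp p h = ((p : ℂ) - 1) * ((p : ℂ) + 1) ^ 2) ∧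
    (p % 4 = 1 → (p : ℤ) ∣ h → Bp p h = ((p : ℂ) - 1) * ((p : ℂ) ^ 2 + 6 * p + 1)) := by
  classical
  set h' : ZMod p := (h : ZMod p) with hh'
  have hdvd : (h' = 0) ↔ ((p : ℤ) ∣ h) := ZMod.intCast_zmod_eq_zero_iff_dvd h p
  -- term computation in case p % 4 = 3
  have case3 : p % 4 = 3 → Bp p h = ((p : ℂ) + 1) ^ 2 * ((if h' = 0 then (p : ℂ) else 0) - 1) := by
    intro h3
    have hε : χC p (-1) = -1 := by rw [χC_neg_one p hp2, if_neg (by omega)]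
    have hg2 : Gp p ^ 2 = -(p : ℂ) := by rw [g_sq p hp2, hε]; ring
    rw [Bp_eq p hp2 h, ← hh', ← S1 p h', Finset.mul_sum]
    refine Finset.sum_congr rfl fun x hx => ?_
    simp only [Finset.mem_filter, Finset.mem_univ, true_and] at hx
    have hq : χC p x * χC p x = 1 := χC_sq_one p hx
    congr 1
    rw [abs4]
    have hconj : (starRingEnd ℂ) (χC p x * Gp p - 1) = -(χC p x * Gp p) - 1 := by
      rw [map_sub, map_mul, map_one, conj_g p, hε]
      have : (starRingEnd ℂ) (χC p x) = χC p x := by simp [χC]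
      rw [this]; ring
    rw [hconj]
    have hCC : (χC p x * Gp p - 1) * (-(χC p x * Gp p) - 1) = (p : ℂ) + 1 := by
      linear_combination (-(Gp p ^ 2)) * hq - hg2
    rw [hCC]
  -- term computation in case p % 4 = 1
  have case1 : p % 4 = 1 → Bp p h =
      ((p : ℂ) ^ 2 + 6 * p + 1) * ((if h' = 0 then (p : ℂ) else 0) - 1)
        - 4 * ((p : ℂ) + 1) * Gp p * (if h' = 0 then 0 else χC p h' * Gp p) := by
    intro h1
    have hε : χC p (-1) = 1 := by rw [χC_neg_one p hp2, if_pos h1]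
    have hg2 : Gp p ^ 2 = (p : ℂ) := by rw [g_sq p hp2, hε]; ring
    rw [Bp_eq p hp2 h, ← hh', ← S1 p h', ← S2 p hp2 h', Finset.mul_sum, Finset.mul_sum,
      ← Finset.sum_sub_distrib]
    refine Finset.sum_congr rfl fun x hx => ?_
    simp only [Finset.mem_filter, Finset.mem_univ, true_and] at hx
    have hq : χC p x * χC p x = 1 := χC_sq_one p hx
    have hconj : (starRingEnd ℂ) (χC p x * Gp p - 1) = χC p x * Gp p - 1 := by
      rw [map_sub, map_mul, map_one, conj_g p, hε]
      have : (starRingEnd ℂ) (χC p x) = χC p x := by simp [χC]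
      rw [this]; ring
    rw [abs4, hconj]
    have hCC : ((χC p x * Gp p - 1) * (χC p x * Gp p - 1)) ^ 2
        = ((p : ℂ) ^ 2 + 6 * p + 1) - 4 * ((p : ℂ) + 1) * Gp p * χC p x := by
      have e1 : (χC p x * Gp p - 1) * (χC p x * Gp p - 1) = (p : ℂ) + 1 - 2 * (χC p x * Gp p) := by
        linear_combination Gp p ^ 2 * hq + hg2
      rw [e1]
      linear_combination 4 * Gp p ^ 2 * hq + 4 * hg2
    rw [hCC]
    ring
  -- wrap up
  have hg2' : p % 4 = 1 → Gp p ^ 2 = (p : ℂ) := fun h1 => by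
    rw [g_sq p hp2, χC_neg_one p hp2, if_pos h1]; ring
  have hleg : (legendreSym p h : ℂ) = χC p h' := by
    simp [legendreSym, χC, hh']
  refine ⟨fun h3 hnd => ?_, fun h1 hnd => ?_, fun h3 hd => ?_, fun h1 hd => ?_⟩
  · rw [case3 h3, if_neg (fun h0 => hnd (hdvd.mp h0))]; ring
  · rw [case1 h1, if_neg (fun h0 => hnd (hdvd.mp h0)), if_neg (fun h0 => hnd (hdvd.mp h0)), hleg]
    linear_combination (-4 * ((p : ℂ) + 1) * χC p h') * (hg2' h1)
  · rw [case3 h3, if_pos (hdvd.mpr hd)]; ring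
  · rw [case1 h1, if_pos (hdvd.mpr hd), if_pos (hdvd.mpr hd)]; ring

end
end

section
/- One has 1 + Σ_{k=1}^{∞} (2^k·φ(2^k)³)^{-1} · Σ_{1 ≤ a ≤ 2^k, a odd} C*(2^k,a)²·C*(2^k,−a)·C(2^k,−a) = 4. -/
set_option autoImplicit false

open scoped Classical

noncomputable section

/-- The complete quadratic Gauss sum `C(q,a) = ∑_{x=1}^{q} e(ax²/q)`. -/
def Cfull (q : ℕ) (a : ℤ) : ℂ :=
  ∑ x ∈ Finset.Icc 1 q, e ((a : ℝ) * (x : ℝ) ^ 2 / q)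

lemma e_add (x y : ℝ) : e (x + y) = e x * e y := by
  simp [e, mul_add, Complex.exp_add]

lemma e_int (n : ℤ) : e n = 1 := by
  simp [e]
  rw [show 2 * (Real.pi:ℂ) * Complex.I * n = n * (2 * Real.pi * Complex.I) by ring]
  exact Complex.exp_int_mul_two_pi_mul_I n

lemma e_zero : e 0 = 1 := by simpa using e_int 0

lemma e_mul_inv (x : ℝ) : e x * e (-x) = 1 := by
  rw [← e_add]; simp [e_zero]

lemma e_nat_mul (n : ℕ) (x : ℝ) : e (n * x) = e x ^ n := by
  induction n with
  | zero => simp [e]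
  | succ k ih => push_cast; rw [show ((k:ℝ)+1)*x = k*x + x by ring, e_add, ih, pow_succ]

lemma e_half (a : ℤ) (ha : Odd a) : e (a / 2) = -1 := by
  obtain ⟨b, hb⟩ := ha
  have : (a : ℝ)/2 = b + 1/2 := by rw [hb]; push_cast; ring
  rw [this, e_add, e_int]
  have : e (1/2) = -1 := by
    simp [e]
    rw [show 2 * (Real.pi:ℂ) * Complex.I * (2⁻¹:ℂ) = Real.pi * Complex.I by ring]
    exact Complex.exp_pi_mul_I
  rw [this, one_mul]

lemma e_quarter : e (1/4) = Complex.I := by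
  simp [e]
  rw [show 2 * (Real.pi:ℂ) * Complex.I * (4⁻¹:ℂ) = ((Real.pi/2 : ℝ):ℂ) * Complex.I by push_cast; ring]
  rw [Complex.exp_mul_I, ← Complex.ofReal_cos, ← Complex.ofReal_sin]
  norm_num

lemma e_half' : e (1/2) = -1 := by
  have h := e_half 1 ⟨0, by ring⟩
  norm_num at h
  exact h

lemma e_three_quarter : e (3/4) = -Complex.I := by
  rw [show (3/4 : ℝ) = 1/4 + 1/2 by norm_num, e_add, e_quarter, e_half']
  ring

lemma e_neg_quarter : e (-(1/4)) = -Complex.I := by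
  rw [show (-(1/4) : ℝ) = ((-1 : ℤ):ℝ) + 3/4 by push_cast; norm_num, e_add, e_int, e_three_quarter]
  ring

lemma e_neg_three_quarter : e (-(3/4)) = Complex.I := by
  rw [show (-(3/4) : ℝ) = ((-1 : ℤ):ℝ) + 1/4 by push_cast; norm_num, e_add, e_int, e_quarter]
  ring

lemma e_q_pow (a : ℤ) (q : ℕ) (hq : 0 < q) : e (a / q) ^ q = 1 := by
  rw [← e_nat_mul, show (q:ℝ) * ((a:ℝ)/q) = (a:ℝ) by field_simp, e_int]

lemma Cstar_four (a : ℤ) (ha : Odd a) : Cstar 4 a = 2 * e (a/4) := by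
  rw [Cstar, show (Finset.Icc 1 4).filter (fun m => Nat.gcd m 4 = 1) = {1,3} by decide]
  rw [Finset.sum_insert (by decide), Finset.sum_singleton]
  push_cast
  set t := e ((a:ℝ)/4) with ht
  have h1 : (a:ℝ) * 1^2 / 4 = ((1:ℕ):ℝ) * ((a:ℝ)/4) := by push_cast; ring
  have h3 : (a:ℝ) * 3^2 / 4 = ((9:ℕ):ℝ) * ((a:ℝ)/4) := by push_cast; ring
  rw [h1, h3, e_nat_mul, e_nat_mul, ← ht]
  have h4 : t ^ 4 = 1 := e_q_pow a 4 (by norm_num)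
  linear_combination (t^5 + t) * h4

lemma Cstar_eight (a : ℤ) (ha : Odd a) : Cstar 8 a = 4 * e (a/8) := by
  rw [Cstar, show (Finset.Icc 1 8).filter (fun m => Nat.gcd m 8 = 1) = {1,3,5,7} by decide]
  rw [Finset.sum_insert (by decide), Finset.sum_insert (by decide),
      Finset.sum_insert (by decide), Finset.sum_singleton]
  push_cast
  set t := e ((a:ℝ)/8) with ht
  have h1 : (a:ℝ) * 1^2 / 8 = ((1:ℕ):ℝ) * ((a:ℝ)/8) := by push_cast; ring
  have h3 : (a:ℝ) * 3^2 / 8 = ((9:ℕ):ℝ) * ((a:ℝ)/8) := by push_cast; ring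
  have h5 : (a:ℝ) * 5^2 / 8 = ((25:ℕ):ℝ) * ((a:ℝ)/8) := by push_cast; ring
  have h7 : (a:ℝ) * 7^2 / 8 = ((49:ℕ):ℝ) * ((a:ℝ)/8) := by push_cast; ring
  rw [h1, h3, h5, h7, e_nat_mul, e_nat_mul, e_nat_mul, e_nat_mul, ← ht]
  have h8 : t ^ 8 = 1 := e_q_pow a 8 (by norm_num)
  linear_combination (t^41 + t^33 + t^25 + 2*t^17 + 2*t^9 + 3*t) * h8

lemma Cfull_two (a : ℤ) (ha : Odd a) : Cfull 2 a = 0 := by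
  rw [Cfull, show (Finset.Icc 1 2) = {1,2} by decide,
      Finset.sum_insert (by decide), Finset.sum_singleton]
  push_cast
  have h1 : (a:ℝ) * 1^2 / 2 = (a:ℝ)/2 := by ring
  have h2 : (a:ℝ) * 2^2 / 2 = ((2*a : ℤ):ℝ) := by push_cast; ring
  rw [h1, h2, e_int, e_half a ha]
  ring

lemma Cfull_four (a : ℤ) (ha : Odd a) : Cfull 4 a = 2 + 2 * e (a/4) := by
  rw [Cfull, show (Finset.Icc 1 4) = {1,2,3,4} by decide,
      Finset.sum_insert (by decide), Finset.sum_insert (by decide),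
      Finset.sum_insert (by decide), Finset.sum_singleton]
  push_cast
  set t := e ((a:ℝ)/4) with ht
  have h1 : (a:ℝ) * 1^2 / 4 = ((1:ℕ):ℝ) * ((a:ℝ)/4) := by push_cast; ring
  have h2 : (a:ℝ) * 2^2 / 4 = ((a : ℤ):ℝ) := by push_cast; ring
  have h3 : (a:ℝ) * 3^2 / 4 = ((9:ℕ):ℝ) * ((a:ℝ)/4) := by push_cast; ring
  have h4 : (a:ℝ) * 4^2 / 4 = ((4*a : ℤ):ℝ) := by push_cast; ring
  rw [h1, h2, h3, h4, e_int, e_int, e_nat_mul, e_nat_mul, ← ht]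
  have hq : t ^ 4 = 1 := e_q_pow a 4 (by norm_num)
  linear_combination (t^5 + t) * hq

lemma Cfull_eight (a : ℤ) (ha : Odd a) : Cfull 8 a = 4 * e (a/8) := by
  rw [Cfull, show (Finset.Icc 1 8) = {1,2,3,4,5,6,7,8} by decide,
      Finset.sum_insert (by decide), Finset.sum_insert (by decide),
      Finset.sum_insert (by decide), Finset.sum_insert (by decide),
      Finset.sum_insert (by decide), Finset.sum_insert (by decide),
      Finset.sum_insert (by decide), Finset.sum_singleton]
  push_cast
  set t := e ((a:ℝ)/8) with ht
  have h1 : (a:ℝ) * 1^2 / 8 = ((1:ℕ):ℝ) * ((a:ℝ)/8) := by push_cast; ring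
  have h2 : (a:ℝ) * 2^2 / 8 = (a:ℝ)/2 := by ring
  have h3 : (a:ℝ) * 3^2 / 8 = ((9:ℕ):ℝ) * ((a:ℝ)/8) := by push_cast; ring
  have h4 : (a:ℝ) * 4^2 / 8 = ((2*a : ℤ):ℝ) := by push_cast; ring
  have h5 : (a:ℝ) * 5^2 / 8 = ((25:ℕ):ℝ) * ((a:ℝ)/8) := by push_cast; ring
  have h6 : (a:ℝ) * 6^2 / 8 = ((4*a : ℤ):ℝ) + (a:ℝ)/2 := by push_cast; ring
  have h7 : (a:ℝ) * 7^2 / 8 = ((49:ℕ):ℝ) * ((a:ℝ)/8) := by push_cast; ring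
  have h8 : (a:ℝ) * 8^2 / 8 = ((8*a : ℤ):ℝ) := by push_cast; ring
  rw [h1, h2, h3, h4, h5, h6, h7, h8, e_add, e_int, e_int, e_int,
      e_half a ha, e_nat_mul, e_nat_mul, e_nat_mul, e_nat_mul, ← ht]
  have hq : t ^ 8 = 1 := e_q_pow a 8 (by norm_num)
  linear_combination (t^41 + t^33 + t^25 + 2*t^17 + 2*t^9 + 3*t) * hq
lemma gcd_two_pow (m K : ℕ) (hK : 0 < K) : Nat.gcd m (2^K) = 1 ↔ m % 2 = 1 := by
  rw [show (Nat.gcd m (2^K) = 1) = Nat.Coprime m (2^K) from rfl,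
      Nat.coprime_pow_right_iff hK]
  constructor
  · intro h
    by_contra h2
    have hd : 2 ∣ m := by omega
    have hd2 := Nat.dvd_gcd hd (dvd_refl 2)
    have := Nat.le_of_dvd (by rw [h]; norm_num) hd2
    omega
  · intro h
    have h1 := Nat.gcd_dvd_left m 2
    have h2 := Nat.gcd_dvd_right m 2
    rcases (Nat.dvd_prime Nat.prime_two).mp h2 with h' | h'
    · exact h'
    · exfalso
      have : 2 ∣ m := h' ▸ h1
      omega

lemma Cstar_vanish (n : ℕ) (a : ℤ) (ha : Odd a) : Cstar (2^(n+4)) a = 0 := by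
  set q := 2^(n+4) with hqdef
  set c := 2^(n+2) with hcdef
  have hcZ : ((c:ℕ):ℤ) = 2^n * 4 := by rw [hcdef]; push_cast; rw [pow_add]; ring
  have hqZ : ((q:ℕ):ℤ) = 2^n * 16 := by rw [hqdef]; push_cast; rw [pow_add]; ring
  have hqR : ((q:ℕ):ℝ) = 2 * 2^(n+3) := by
    rw [hqdef]; push_cast; rw [pow_add, pow_add]; ring
  have hcc : c = 4 * 2^n := by rw [hcdef, pow_add]; ring
  have hqc : q = 4 * c := by rw [hqdef, hcdef, pow_add, pow_add]; ring
  -- the key analytic step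
  have step : ∀ (m m' : ℕ) (t : ℤ), m % 2 = 1 →
      ((m':ℤ))^2 = (m:ℤ)^2 + 2^(n+3) * (-(m:ℤ)) + (q:ℤ) * t →
      e ((a:ℝ) * (m':ℝ)^2 / q) = - e ((a:ℝ) * (m:ℝ)^2 / q) := by
    intro m m' t hm hw
    have hoddm : Odd ((a : ℤ) * (-(m:ℤ))) := by
      refine ha.mul ?_
      refine Odd.neg ?_
      rw [Int.odd_iff]; omega
    have harg : (a:ℝ) * (m':ℝ)^2 / q =
        (a:ℝ) * (m:ℝ)^2 / q + ((a * (-(m:ℤ)) : ℤ):ℝ)/2 + ((a * t : ℤ):ℝ) := by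
      have hw' : ((m':ℝ))^2 = (m:ℝ)^2 + 2^(n+3) * (-(m:ℝ)) + ((q:ℕ):ℝ) * (t:ℝ) := by
        exact_mod_cast congrArg (fun z : ℤ => (z : ℝ)) hw
      rw [hw', hqR]
      have h2 : (2:ℝ)^(n+3) ≠ 0 := by positivity
      push_cast
      field_simp
    rw [harg, e_add, e_add, e_int, e_half _ hoddm]
    ring
  rw [Cstar]
  apply Finset.sum_involution (g := fun m _ => if m < c then c - m else q + c - m)
  · -- hg₁ : sum of pairs is zero
    intro m hm
    simp only [Finset.mem_filter, Finset.mem_Icc] at hm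
    obtain ⟨⟨h1m, hmq⟩, hg⟩ := hm
    have hodd : m % 2 = 1 := (gcd_two_pow m (n+4) (by omega)).mp hg
    by_cases h : m < c
    · simp only [h, if_pos]
      have hkey : e ((a:ℝ) * ((c - m : ℕ):ℝ)^2 / q) = - e ((a:ℝ) * (m:ℝ)^2 / q) := by
        apply step m (c - m) (2^n) hodd
        have : ((c - m : ℕ) : ℤ) = (c:ℤ) - m := by
          rw [Nat.cast_sub h.le]
        rw [this, hcZ, hqZ]
        ring
      rw [hkey]; ring
    · simp only [h, if_neg, not_false_iff]
      have hmc : c ≤ m := not_lt.mp h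
      have hkey : e ((a:ℝ) * ((q + c - m : ℕ):ℝ)^2 / q) = - e ((a:ℝ) * (m:ℝ)^2 / q) := by
        apply step m (q + c - m) (25 * 2^n - 2 * m) hodd
        have : ((q + c - m : ℕ) : ℤ) = (q:ℤ) + c - m := by
          rw [Nat.cast_sub (by omega)]; push_cast; ring
        rw [this, hcZ, hqZ]
        push_cast
        ring
      rw [hkey]; ring
  · -- hg₃ : no fixed point
    intro m hm _
    simp only [Finset.mem_filter, Finset.mem_Icc] at hm
    obtain ⟨⟨h1m, hmq⟩, hg⟩ := hm
    have hodd : m % 2 = 1 := (gcd_two_pow m (n+4) (by omega)).mp hg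
    by_cases h : m < c
    · simp only [h, if_pos]; omega
    · simp only [h, if_neg, not_false_iff]; omega
  · -- g_mem
    intro m hm
    simp only [Finset.mem_filter, Finset.mem_Icc] at hm ⊢
    obtain ⟨⟨h1m, hmq⟩, hg⟩ := hm
    have hodd : m % 2 = 1 := (gcd_two_pow m (n+4) (by omega)).mp hg
    have hodd' : (if m < c then c - m else q + c - m) % 2 = 1 := by
      by_cases h : m < c
      · simp only [h, if_pos]; omega
      · simp only [h, if_neg, not_false_iff]; omega
    refine ⟨⟨?_, ?_⟩, (gcd_two_pow _ (n+4) (by omega)).mpr hodd'⟩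
    · by_cases h : m < c
      · simp only [h, if_pos]; omega
      · simp only [h, if_neg, not_false_iff]; omega
    · by_cases h : m < c
      · simp only [h, if_pos]; omega
      · simp only [h, if_neg, not_false_iff]; omega
  · -- hg₄ : involution
    intro m hm
    simp only [Finset.mem_filter, Finset.mem_Icc] at hm
    obtain ⟨⟨h1m, hmq⟩, hg⟩ := hm
    have hodd : m % 2 = 1 := (gcd_two_pow m (n+4) (by omega)).mp hg
    by_cases h : m < c
    · have h2 : c - m < c := by omega
      simp only [h, h2, if_pos]
      omega
    · have h2 : ¬ (q + c - m < c) := by omega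
      simp only [h, h2, if_neg, not_false_iff]
      omega

/-- The 2-adic factor:
`1 + ∑_{k ≥ 1} (2^k φ(2^k)³)⁻¹ ∑_{a odd, 1 ≤ a ≤ 2^k} C*(2^k,a)² C*(2^k,−a) C(2^k,−a) = 4`. -/
theorem two_adic_factor_eq_four :
    1 + (∑' k : ℕ,
      (1 / ((2 ^ (k + 1) : ℂ) * ((Nat.totient (2 ^ (k + 1)) : ℂ)) ^ 3)) *
        ∑ a ∈ (Finset.Icc 1 (2 ^ (k + 1))).filter (fun a => a % 2 = 1),
          (Cstar (2 ^ (k + 1)) (a : ℤ)) ^ 2 * Cstar (2 ^ (k + 1)) (-(a : ℤ)) *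
            Cfull (2 ^ (k + 1)) (-(a : ℤ))) = 4 := by
  rw [tsum_eq_sum (s := Finset.range 3) ?_]
  · rw [Finset.sum_range_succ, Finset.sum_range_succ, Finset.sum_range_succ,
        Finset.sum_range_zero]
    have h0 : ((Finset.Icc (1:ℤ) (2 ^ (0 + 1))).filter (fun a => a % 2 = 1)) = {1} := by
      ext a; simp [Finset.mem_filter, Finset.mem_Icc]; omega
    have h1 : ((Finset.Icc (1:ℤ) (2 ^ (1 + 1))).filter (fun a => a % 2 = 1)) = {1,3} := by
      ext a; simp [Finset.mem_filter, Finset.mem_Icc]; omega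
    have h2 : ((Finset.Icc (1:ℤ) (2 ^ (2 + 1))).filter (fun a => a % 2 = 1)) = {1,3,5,7} := by
      ext a; simp [Finset.mem_filter, Finset.mem_Icc]; omega
    rw [h0, h1, h2, Finset.sum_singleton,
        Finset.sum_insert (by decide), Finset.sum_singleton,
        Finset.sum_insert (by decide), Finset.sum_insert (by decide),
        Finset.sum_insert (by decide), Finset.sum_singleton]
    -- evaluate all C values
    have c2 : Cfull (2^(0+1)) (-(1:ℤ)) = 0 := Cfull_two (-1) ⟨-1, by ring⟩
    have q4 : ∀ a : ℤ, Odd a → Cstar (2^(1+1)) a = 2 * e ((a:ℝ)/4) :=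
      fun a ha => Cstar_four a ha
    have q4' : ∀ a : ℤ, Odd a → Cstar (2^(1+1)) (-a) = 2 * e (-((a:ℝ)/4)) := by
      intro a ha
      rw [show (2^(1+1) : ℕ) = 4 by norm_num, Cstar_four (-a) ha.neg]
      push_cast
      norm_num
      rw [neg_div]
    have f4 : ∀ a : ℤ, Odd a → Cfull (2^(1+1)) (-a) = 2 + 2 * e (-((a:ℝ)/4)) := by
      intro a ha
      rw [show (2^(1+1) : ℕ) = 4 by norm_num, Cfull_four (-a) ha.neg]
      push_cast
      norm_num
      rw [neg_div]
    have q8 : ∀ a : ℤ, Odd a → Cstar (2^(2+1)) a = 4 * e ((a:ℝ)/8) :=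
      fun a ha => Cstar_eight a ha
    have q8' : ∀ a : ℤ, Odd a → Cstar (2^(2+1)) (-a) = 4 * e (-((a:ℝ)/8)) := by
      intro a ha
      rw [show (2^(2+1) : ℕ) = 8 by norm_num, Cstar_eight (-a) ha.neg]
      push_cast
      norm_num
      rw [neg_div]
    have f8 : ∀ a : ℤ, Odd a → Cfull (2^(2+1)) (-a) = 4 * e (-((a:ℝ)/8)) := by
      intro a ha
      rw [show (2^(2+1) : ℕ) = 8 by norm_num, Cfull_eight (-a) ha.neg]
      push_cast
      norm_num
      rw [neg_div]
    have o1 : Odd (1:ℤ) := ⟨0, by ring⟩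
    have o3 : Odd (3:ℤ) := ⟨1, by ring⟩
    have o5 : Odd (5:ℤ) := ⟨2, by ring⟩
    have o7 : Odd (7:ℤ) := ⟨3, by ring⟩
    rw [c2, q4 1 o1, q4 3 o3, q4' 1 o1, q4' 3 o3, f4 1 o1, f4 3 o3,
        q8 1 o1, q8 3 o3, q8 5 o5, q8 7 o7,
        q8' 1 o1, q8' 3 o3, q8' 5 o5, q8' 7 o7,
        f8 1 o1, f8 3 o3, f8 5 o5, f8 7 o7]
    -- totients
    rw [show ((2:ℕ)^(0+1)) = 2 by norm_num, show ((2:ℕ)^(1+1)) = 4 by norm_num,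
        show ((2:ℕ)^(2+1)) = 8 by norm_num]
    rw [show Nat.totient 2 = 1 by decide, show Nat.totient 4 = 2 by decide,
        show Nat.totient 8 = 4 by decide]
    -- quarter values
    push_cast
    rw [show e ((1:ℝ)/4) = Complex.I from e_quarter,
        show e ((3:ℝ)/4) = -Complex.I by rw [show ((3:ℝ)/4) = (3/4:ℝ) by norm_num]; exact e_three_quarter,
        show e (-((1:ℝ)/4)) = -Complex.I from e_neg_quarter,
        show e (-((3:ℝ)/4)) = Complex.I from e_neg_three_quarter]
    -- eighth cancellations
    have k1 : e ((1:ℝ)/8) * e (-((1:ℝ)/8)) = 1 := e_mul_inv _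
    have k3 : e ((3:ℝ)/8) * e (-((3:ℝ)/8)) = 1 := e_mul_inv _
    have k5 : e ((5:ℝ)/8) * e (-((5:ℝ)/8)) = 1 := e_mul_inv _
    have k7 : e ((7:ℝ)/8) * e (-((7:ℝ)/8)) = 1 := e_mul_inv _
    set t1 := e ((1:ℝ)/8); set s1 := e (-((1:ℝ)/8))
    set t3 := e ((3:ℝ)/8); set s3 := e (-((3:ℝ)/8))
    set t5 := e ((5:ℝ)/8); set s5 := e (-((5:ℝ)/8))
    set t7 := e ((7:ℝ)/8); set s7 := e (-((7:ℝ)/8))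
    norm_num
    have hI4 : Complex.I ^ 4 = 1 := by
      rw [show (4:ℕ) = 2*2 from rfl, pow_mul, Complex.I_sq]; norm_num
    have p1 : t1^2 * s1^2 = 1 := by linear_combination (t1*s1 + 1) * k1
    have p3 : t3^2 * s3^2 = 1 := by linear_combination (t3*s3 + 1) * k3
    have p5 : t5^2 * s5^2 = 1 := by linear_combination (t5*s5 + 1) * k5
    have p7 : t7^2 * s7^2 = 1 := by linear_combination (t7*s7 + 1) * k7
    linear_combination (2 * (t1*s1) + 2) * k1 + (2 * (t3*s3) + 2) * k3
      + (2 * (t5*s5) + 2) * k5 + (2 * (t7*s7) + 2) * k7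
      + hI4 + (-3/2) * (p1 + p3 + p5 + p7)
  · -- vanishing for k ≥ 3
    intro k hk
    simp only [Finset.mem_range, not_lt] at hk
    have hke : k + 1 = (k - 3) + 4 := by omega
    rw [hke]
    refine mul_eq_zero_of_right _ (Finset.sum_eq_zero ?_)
    intro a ha
    rw [Finset.mem_filter] at ha
    rw [Cstar_vanish (k-3) a (Int.odd_iff.mpr ha.2)]
    ring
end
end
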